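/- Let 0 < a < b, n ∈ (−1,∞) \ {0}, λ ∈ [0,1] and q ≥ 1. With H = 2ab/(a+b), G = √(ab), A(x,y) = (x+y)/2, and the n-logarithmic mean Lₙ = ( (b^{n+1} − a^{n+1}) / ((n+1)(b−a)) )^{1/n}, the following inequality holds: |(1−λ)·H^{n+2} + λ·A(a^{n+2}, b^{n+2}) − G²·Lₙⁿ| ≤ (ab(b−a)(n+2)/2)·{ C₁(λ;a,b)^{1−1/q}·[C₂(λ;a,b)·a^{(n+1)q} + C₃(λ;a,b)·b^{(n+1)q}]^{1/q} + C₁(λ;b,a)^{1−1/q}·[C₃(λ;b,a)·a^{(n+1)q} + C₂(λ;b,a)·b^{(n+1)q}]^{1/q} }. -/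

import Mathlib

open MeasureTheory Set intervalIntegral

set_option maxHeartbeats 2000000

/-- `C₁(λ; u, ϑ)` from Theorem 2.2. -/
noncomputable def C1 (lam u v : ℝ) : ℝ :=
  (1 / (v - u) ^ 2) *
    (-4 + (lam * (v - u) + 2 * u) * (3 * u + v) / (u * (u + v))
      + 2 * Real.log (2 * u * (u + v) / (2 * u + lam * (v - u)) ^ 2))

/-- `C₂(λ; u, ϑ)` from Theorem 2.2. -/
noncomputable def C2 (lam u v : ℝ) : ℝ :=
  (1 / (v - u) ^ 3) *
    ((lam * (v - u) + 4 * u) * Real.log ((lam * (v - u) + 2 * u) ^ 2 / (2 * u * (u + v)))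
      - (lam * (v - u) + 2 * u) * (5 * u + 3 * v) / (u + v) + 7 * u + v)

/-- `C₃(λ; u, ϑ) = C₁(λ; u, ϑ) - C₂(λ; u, ϑ)`. -/
noncomputable def C3 (lam u v : ℝ) : ℝ := C1 lam u v - C2 lam u v



lemma jensen2 (w₁ w₂ z₁ z₂ : ℝ) (h1 : 0 ≤ w₁) (h2 : 0 ≤ w₂) (hz1 : 0 ≤ z₁) (hz2 : 0 ≤ z₂)
    (hw : w₁ + w₂ = 1) {p : ℝ} (hp : 1 ≤ p) :
    (w₁ * z₁ + w₂ * z₂) ^ p ≤ w₁ * z₁ ^ p + w₂ * z₂ ^ p := by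
  have h := Real.rpow_arith_mean_le_arith_mean_rpow Finset.univ ![w₁, w₂] ![z₁, z₂]
    (by intro i _; fin_cases i <;> simpa) (by simp [Fin.sum_univ_two, hw])
    (by intro i _; fin_cases i <;> simpa) hp
  simpa [Fin.sum_univ_two] using h

lemma jensenC (c2 c3 x y q : ℝ) (h2 : 0 ≤ c2) (h3 : 0 ≤ c3) (hx : 0 ≤ x) (hy : 0 ≤ y)
    (hq : 1 ≤ q) :
    c2 * x + c3 * y ≤ (c2 + c3) ^ (1 - 1/q) * (c2 * x ^ q + c3 * y ^ q) ^ (1/q) := by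
  have hq0 : 0 < q := lt_of_lt_of_le one_pos hq
  rcases eq_or_lt_of_le (add_nonneg h2 h3) with h0 | h0
  · have hc2 : c2 = 0 := by nlinarith
    have hc3 : c3 = 0 := by nlinarith
    simp only [hc2, hc3, zero_mul, add_zero]
    positivity
  · set c1 := c2 + c3 with hc1
    have key := jensen2 (c2/c1) (c3/c1) x y (by positivity) (by positivity) hx hy
      (by field_simp; exact hc1.symm) hq
    have hxy : 0 ≤ c2/c1 * x + c3/c1 * y := by positivity
    have key2 : ((c2/c1 * x + c3/c1 * y) ^ q) ^ (1/q) ≤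
        ((c2/c1) * x ^ q + (c3/c1) * y ^ q) ^ (1/q) :=
      Real.rpow_le_rpow (by positivity) key (by positivity)
    rw [← Real.rpow_mul hxy, mul_one_div, div_self (ne_of_gt hq0), Real.rpow_one] at key2
    have key3 : c1 * (c2/c1 * x + c3/c1 * y) ≤ c1 * ((c2/c1) * x ^ q + (c3/c1) * y ^ q) ^ (1/q) :=
      mul_le_mul_of_nonneg_left key2 h0.le
    calc c2 * x + c3 * y = c1 * (c2/c1 * x + c3/c1 * y) := by field_simp
    _ ≤ c1 * ((c2/c1) * x ^ q + (c3/c1) * y ^ q) ^ (1/q) := key3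
    _ = c1 ^ (1 - 1/q) * (c2 * x ^ q + c3 * y ^ q) ^ (1/q) := by
        have e1 : (c2/c1) * x ^ q + (c3/c1) * y ^ q = (c2 * x ^ q + c3 * y ^ q) / c1 := by ring
        rw [e1, Real.div_rpow (by positivity) h0.le]
        rw [show (1:ℝ) - 1/q = 1 - 1/q from rfl]
        have : c1 ^ ((1:ℝ) - 1/q) = c1 / c1 ^ (1/q : ℝ) := by
          rw [Real.rpow_sub h0, Real.rpow_one]
        rw [this]
        field_simp

lemma hasDerivAt_phi1 (a e c s : ℝ) (he : e ≠ 0) (hs : 0 < a + s * e) :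
    HasDerivAt (fun t => Real.log (a + t * e) / e ^ 2 + (a + c * e) / (e ^ 2 * (a + t * e)))
      ((s - c) / (a + s * e) ^ 2) s := by
  have hD : HasDerivAt (fun t : ℝ => a + t * e) e s := by
    simpa using ((hasDerivAt_id s).mul_const e).const_add a
  have h1 : HasDerivAt (fun t => Real.log (a + t * e) / e ^ 2) (e / (a + s * e) / e ^ 2) s :=
    (hD.log (ne_of_gt hs)).div_const _
  have hD2 : HasDerivAt (fun t : ℝ => e ^ 2 * (a + t * e)) (e ^ 2 * e) s := hD.const_mul _
  have h2 : HasDerivAt (fun t => (a + c * e) / (e ^ 2 * (a + t * e)))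
      ((0 * (e ^ 2 * (a + s * e)) - (a + c * e) * (e ^ 2 * e)) / (e ^ 2 * (a + s * e)) ^ 2) s :=
    (hasDerivAt_const s (a + c * e)).div hD2 (by positivity)
  refine (h1.add h2).congr_deriv ?_
  symm
  field_simp
  ring

lemma hasDerivAt_phi2 (a e c s : ℝ) (he : e ≠ 0) (hs : 0 < a + s * e) :
    HasDerivAt (fun t => ((a + t * e) - (2 * a + c * e) * Real.log (a + t * e)
        - (a ^ 2 + a * c * e) / (a + t * e)) / e ^ 3)
      ((s - c) * s / (a + s * e) ^ 2) s := by
  have hD : HasDerivAt (fun t : ℝ => a + t * e) e s := by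
    simpa using ((hasDerivAt_id s).mul_const e).const_add a
  have h1 : HasDerivAt (fun t => (2 * a + c * e) * Real.log (a + t * e))
      ((2 * a + c * e) * (e / (a + s * e))) s := (hD.log (ne_of_gt hs)).const_mul _
  have h2 : HasDerivAt (fun t => (a ^ 2 + a * c * e) / (a + t * e))
      ((0 * (a + s * e) - (a ^ 2 + a * c * e) * e) / (a + s * e) ^ 2) s :=
    (hasDerivAt_const s (a ^ 2 + a * c * e)).div hD (ne_of_gt hs)
  refine (((hD.sub h1).sub h2).div_const (e ^ 3)).congr_deriv ?_
  symm
  field_simp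
  ring

lemma integral_abs_split (f g phi : ℝ → ℝ) (x y c : ℝ) (hxc : x ≤ c) (hcy : c ≤ y)
    (hderiv : ∀ t ∈ Icc x y, HasDerivAt phi (f t) t)
    (hcontf : ContinuousOn f (Icc x y)) (hcontg : ContinuousOn g (Icc x y))
    (hneg : ∀ t ∈ Icc x c, g t = -(f t)) (hpos : ∀ t ∈ Icc c y, g t = f t) :
    ∫ s in x..y, g s = phi y + phi x - 2 * phi c := by
  have hxy : x ≤ y := le_trans hxc hcy
  have hIcc1 : Icc x c ⊆ Icc x y := Icc_subset_Icc le_rfl hcy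
  have hIcc2 : Icc c y ⊆ Icc x y := Icc_subset_Icc hxc le_rfl
  have h1 : ∫ s in x..c, f s = phi c - phi x :=
    integral_eq_sub_of_hasDerivAt (fun t ht => hderiv t (hIcc1 ((uIcc_of_le hxc) ▸ ht)))
      ((hcontf.mono hIcc1).intervalIntegrable_of_Icc hxc)
  have h2 : ∫ s in c..y, f s = phi y - phi c :=
    integral_eq_sub_of_hasDerivAt (fun t ht => hderiv t (hIcc2 ((uIcc_of_le hcy) ▸ ht)))
      ((hcontf.mono hIcc2).intervalIntegrable_of_Icc hcy)
  have h1' : ∫ s in x..c, g s = -(phi c - phi x) := by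
    rw [← h1, ← intervalIntegral.integral_neg]
    apply intervalIntegral.integral_congr
    intro t ht
    exact hneg t ((uIcc_of_le hxc) ▸ ht)
  have h2' : ∫ s in c..y, g s = phi y - phi c := by
    rw [← h2]
    apply intervalIntegral.integral_congr
    intro t ht
    exact hpos t ((uIcc_of_le hcy) ▸ ht)
  have hint : ∫ s in x..y, g s = (∫ s in x..c, g s) + ∫ s in c..y, g s :=
    (integral_add_adjacent_intervals
      ((hcontg.mono hIcc1).intervalIntegrable_of_Icc hxc)
      ((hcontg.mono hIcc2).intervalIntegrable_of_Icc hcy)).symm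
  rw [hint, h1', h2']
  ring
noncomputable def phi1 (a e c t : ℝ) : ℝ :=
  Real.log (a + t * e) / e ^ 2 + (a + c * e) / (e ^ 2 * (a + t * e))

noncomputable def phi2 (a e c t : ℝ) : ℝ :=
  ((a + t * e) - (2 * a + c * e) * Real.log (a + t * e)
    - (a ^ 2 + a * c * e) / (a + t * e)) / e ^ 3


lemma int_abs_1 (a e x y c : ℝ) (ha : 0 < a) (he : 0 < e) (hx : 0 ≤ x) (hxc : x ≤ c)
    (hcy : c ≤ y) :
    ∫ s in x..y, |s - c| / (a + s * e) ^ 2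
      = phi1 a e c y + phi1 a e c x - 2 * phi1 a e c c := by
  have hpos : ∀ t ∈ Icc x y, 0 < a + t * e := fun t ht => by nlinarith [ht.1]
  apply integral_abs_split (fun s => (s - c) / (a + s * e) ^ 2) _ (phi1 a e c) x y c hxc hcy
  · intro t ht
    exact hasDerivAt_phi1 a e c t (ne_of_gt he) (hpos t ht)
  · exact ContinuousOn.div (by fun_prop) (by fun_prop)
      (fun t ht => ne_of_gt (pow_pos (hpos t ht) 2))
  · exact ContinuousOn.div (by fun_prop) (by fun_prop)
      (fun t ht => ne_of_gt (pow_pos (hpos t ht) 2))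
  · intro t ht
    rw [abs_of_nonpos (by linarith [ht.2])]
    ring
  · intro t ht
    rw [abs_of_nonneg (by linarith [ht.1])]

lemma int_abs_2 (a e x y c : ℝ) (ha : 0 < a) (he : 0 < e) (hx : 0 ≤ x) (hxc : x ≤ c)
    (hcy : c ≤ y) :
    ∫ s in x..y, |s - c| * s / (a + s * e) ^ 2
      = phi2 a e c y + phi2 a e c x - 2 * phi2 a e c c := by
  have hpos : ∀ t ∈ Icc x y, 0 < a + t * e := fun t ht => by nlinarith [ht.1]
  apply integral_abs_split (fun s => (s - c) * s / (a + s * e) ^ 2) _ (phi2 a e c) x y c hxc hcy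
  · intro t ht
    exact hasDerivAt_phi2 a e c t (ne_of_gt he) (hpos t ht)
  · exact ContinuousOn.div (by fun_prop) (by fun_prop)
      (fun t ht => ne_of_gt (pow_pos (hpos t ht) 2))
  · exact ContinuousOn.div (by fun_prop) (by fun_prop)
      (fun t ht => ne_of_gt (pow_pos (hpos t ht) 2))
  · intro t ht
    rw [abs_of_nonpos (by linarith [ht.2])]
    ring
  · intro t ht
    rw [abs_of_nonneg (by linarith [ht.1])]

lemma E1 (a b lam : ℝ) (ha : 0 < a) (hab : a < b) (hl0 : 0 ≤ lam) (hl1 : lam ≤ 1) :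
    2 * (phi1 a (b-a) (lam/2) (1/2) + phi1 a (b-a) (lam/2) 0
      - 2 * phi1 a (b-a) (lam/2) (lam/2)) = C1 lam a b := by
  have hb : 0 < b := lt_trans ha hab
  have he : (0:ℝ) < b - a := by linarith
  have hm : 0 < 2*a + lam*(b-a) := by nlinarith
  have hab2 : 0 < a + b := by linarith
  have ne1 : a ≠ 0 := ne_of_gt ha
  have ne2 : b ≠ 0 := ne_of_gt hb
  have ne3 : b - a ≠ 0 := ne_of_gt he
  have ne4 : a + b ≠ 0 := ne_of_gt hab2
  have ne5 : a - b ≠ 0 := by intro h; exact ne3 (by linarith)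
  have ne1 : a ≠ 0 := ne_of_gt ha
  have ne2 : b ≠ 0 := ne_of_gt hb
  have ne3 : b - a ≠ 0 := ne_of_gt he
  have ne4 : a + b ≠ 0 := ne_of_gt hab2
  have ne5 : a - b ≠ 0 := by intro h; exact ne3 (by linarith)
  simp only [phi1, C1]
  rw [show a + 1/2*(b-a) = (a+b)/2 by ring, show a + 0*(b-a) = a by ring,
    show a + lam/2*(b-a) = (2*a+lam*(b-a))/2 by ring,
    show 2*a*(a+b)/(2*a+lam*(b-a))^2 = 2*a*(a+b)/(2*a+lam*(b-a))^2 from rfl]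
  rw [Real.log_div (by positivity) (by norm_num),
      Real.log_div (by positivity) (by norm_num),
      Real.log_div (by positivity) (by positivity),
      Real.log_mul (by positivity) (by positivity),
      Real.log_mul (by norm_num) (by positivity),
      Real.log_pow]
  set L2 := Real.log 2
  set LA := Real.log a
  set LAB := Real.log (a+b)
  set LM := Real.log (2*a+lam*(b-a))
  field_simp
  ring

lemma E2 (a b lam : ℝ) (ha : 0 < a) (hab : a < b) (hl0 : 0 ≤ lam) (hl1 : lam ≤ 1) :
    2 * (phi2 a (b-a) (lam/2) (1/2) + phi2 a (b-a) (lam/2) 0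
      - 2 * phi2 a (b-a) (lam/2) (lam/2)) = C2 lam a b := by
  have hb : 0 < b := lt_trans ha hab
  have he : (0:ℝ) < b - a := by linarith
  have hm : 0 < 2*a + lam*(b-a) := by nlinarith
  have hab2 : 0 < a + b := by linarith
  have ne1 : a ≠ 0 := ne_of_gt ha
  have ne2 : b ≠ 0 := ne_of_gt hb
  have ne3 : b - a ≠ 0 := ne_of_gt he
  have ne4 : a + b ≠ 0 := ne_of_gt hab2
  have ne5 : a - b ≠ 0 := by intro h; exact ne3 (by linarith)
  have ne6 : lam*(b-a)+2*a ≠ 0 := by nlinarith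
  simp only [phi2, C2]
  rw [show a + 1/2*(b-a) = (a+b)/2 by ring, show a + 0*(b-a) = a by ring,
    show a + lam/2*(b-a) = (2*a+lam*(b-a))/2 by ring]
  rw [Real.log_div (by positivity) (by norm_num),
      Real.log_div (by positivity) (by norm_num),
      Real.log_div (by positivity) (by positivity),
      Real.log_mul (by positivity) (by positivity),
      Real.log_mul (by norm_num) (by positivity),
      Real.log_pow]
  set L2 := Real.log 2
  set LA := Real.log a
  set LAB := Real.log (a+b)
  set LM := Real.log (lam*(b-a)+2*a)
  rw [show 2*a+lam*(b-a) = lam*(b-a)+2*a by ring]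
  field_simp
  ring

lemma E3 (a b lam : ℝ) (ha : 0 < a) (hab : a < b) (hl0 : 0 ≤ lam) (hl1 : lam ≤ 1) :
    2 * (phi1 a (b-a) (1-lam/2) 1 + phi1 a (b-a) (1-lam/2) (1/2)
      - 2 * phi1 a (b-a) (1-lam/2) (1-lam/2)) = C1 lam b a := by
  have hb : 0 < b := lt_trans ha hab
  have he : (0:ℝ) < b - a := by linarith
  have hm : 0 < 2*b + lam*(a-b) := by nlinarith
  have hab2 : 0 < a + b := by linarith
  have ne1 : a ≠ 0 := ne_of_gt ha
  have ne2 : b ≠ 0 := ne_of_gt hb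
  have ne3 : b - a ≠ 0 := ne_of_gt he
  have ne4 : a + b ≠ 0 := ne_of_gt hab2
  have ne5 : a - b ≠ 0 := by intro h; exact ne3 (by linarith)
  have ne1 : a ≠ 0 := ne_of_gt ha
  have ne2 : b ≠ 0 := ne_of_gt hb
  have ne3 : b - a ≠ 0 := ne_of_gt he
  have ne4 : a + b ≠ 0 := ne_of_gt hab2
  have ne5 : a - b ≠ 0 := by intro h; exact ne3 (by linarith)
  simp only [phi1, C1]
  rw [show a + 1*(b-a) = b by ring, show a + 1/2*(b-a) = (a+b)/2 by ring,
    show a + (1-lam/2)*(b-a) = (2*b+lam*(a-b))/2 by ring,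
    show 2*b*(b+a) = 2*b*(a+b) by ring]
  rw [Real.log_div (by positivity) (by norm_num),
      Real.log_div (by positivity) (by norm_num),
      Real.log_div (by positivity) (by positivity),
      Real.log_mul (by positivity) (by positivity),
      Real.log_mul (by norm_num) (by positivity),
      Real.log_pow]
  set L2 := Real.log 2
  set LB := Real.log b
  set LAB := Real.log (a+b)
  set LM := Real.log (2*b+lam*(a-b))
  field_simp
  ring

lemma E4 (a b lam : ℝ) (ha : 0 < a) (hab : a < b) (hl0 : 0 ≤ lam) (hl1 : lam ≤ 1) :
    2 * (phi2 a (b-a) (1-lam/2) 1 + phi2 a (b-a) (1-lam/2) (1/2)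
      - 2 * phi2 a (b-a) (1-lam/2) (1-lam/2)) = C1 lam b a - C2 lam b a := by
  have hb : 0 < b := lt_trans ha hab
  have he : (0:ℝ) < b - a := by linarith
  have hm : 0 < 2*b + lam*(a-b) := by nlinarith
  have hab2 : 0 < a + b := by linarith
  have ne1 : a ≠ 0 := ne_of_gt ha
  have ne2 : b ≠ 0 := ne_of_gt hb
  have ne3 : b - a ≠ 0 := ne_of_gt he
  have ne4 : a + b ≠ 0 := ne_of_gt hab2
  have ne5 : a - b ≠ 0 := by intro h; exact ne3 (by linarith)
  have ne6 : 2*b+lam*(a-b) ≠ 0 := ne_of_gt hm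
  simp only [phi2, C1, C2]
  rw [show a + 1*(b-a) = b by ring, show a + 1/2*(b-a) = (a+b)/2 by ring,
    show a + (1-lam/2)*(b-a) = (2*b+lam*(a-b))/2 by ring,
    show 2*b*(b+a) = 2*b*(a+b) by ring,
    show lam*(a-b)+2*b = 2*b+lam*(a-b) by ring]
  rw [Real.log_div (by positivity) (by norm_num),
      Real.log_div (by positivity) (by norm_num),
      Real.log_div (by positivity) (by positivity),
      Real.log_div (by positivity) (by positivity),
      Real.log_mul (by positivity) (by positivity),
      Real.log_mul (by norm_num) (by positivity),
      Real.log_pow]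
  set L2 := Real.log 2
  set LB := Real.log b
  set LAB := Real.log (a+b)
  set LM := Real.log (2*b+lam*(a-b))
  field_simp
  ring


lemma hasDerivAt_g (a b n s : ℝ) (hs : 0 < a + s * (b - a)) :
    HasDerivAt (fun t => (a * b) ^ (n + 2) * (a + t * (b - a)) ^ (-(n + 2)))
      ((a * b) ^ (n + 2) * (-(n + 2) * (a + s * (b - a)) ^ (-(n + 2) - 1) * (b - a))) s := by
  have hD : HasDerivAt (fun t : ℝ => a + t * (b - a)) (b - a) s := by
    simpa using ((hasDerivAt_id s).mul_const (b - a)).const_add a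
  have h := (Real.hasDerivAt_rpow_const (p := -(n + 2)) (Or.inl (ne_of_gt hs))).comp s hD
  simpa [mul_comm, mul_assoc, mul_left_comm] using h.const_mul ((a * b) ^ (n + 2))

lemma integral_g (a b n : ℝ) (ha : 0 < a) (hab : a < b) (hn1 : -1 < n) :
    ∫ s in (0:ℝ)..1, (a * b) ^ (n + 2) * (a + s * (b - a)) ^ (-(n + 2))
      = a * b * (b ^ (n + 1) - a ^ (n + 1)) / ((n + 1) * (b - a)) := by
  have hb : 0 < b := lt_trans ha hab
  have he : (0:ℝ) < b - a := by linarith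
  have hn1' : n + 1 ≠ 0 := by intro h; linarith
  have hpos : ∀ t ∈ Set.uIcc (0:ℝ) 1, 0 < a + t * (b - a) := by
    intro t ht
    rw [Set.uIcc_of_le (by norm_num : (0:ℝ) ≤ 1)] at ht
    nlinarith [ht.1]
  have hderiv : ∀ t ∈ Set.uIcc (0:ℝ) 1, HasDerivAt
      (fun s => (a * b) ^ (n + 2) * (a + s * (b - a)) ^ (-(n + 1)) / (-(n + 1) * (b - a)))
      ((a * b) ^ (n + 2) * (a + t * (b - a)) ^ (-(n + 2))) t := by
    intro t ht
    have hD : HasDerivAt (fun s : ℝ => a + s * (b - a)) (b - a) t := by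
      simpa using ((hasDerivAt_id t).mul_const (b - a)).const_add a
    have h := ((Real.hasDerivAt_rpow_const (p := -(n + 1))
      (Or.inl (ne_of_gt (hpos t ht)))).comp t hD).const_mul ((a * b) ^ (n + 2))
    have h2 := h.div_const (-(n + 1) * (b - a))
    have hne : -(n + 1) * (b - a) ≠ 0 := by
      apply mul_ne_zero _ (ne_of_gt he)
      intro hh; apply hn1'; linarith
    refine h2.congr_deriv ?_
    symm
    rw [show -(n+1) - 1 = -(n+2) by ring, eq_div_iff hne]
    ring
  have hcont : ContinuousOn (fun t => (a * b) ^ (n + 2) * (a + t * (b - a)) ^ (-(n + 2)))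
      (Set.uIcc (0:ℝ) 1) := by
    apply ContinuousOn.mul continuousOn_const
    apply ContinuousOn.rpow_const (by fun_prop)
    exact fun t ht => Or.inl (ne_of_gt (hpos t ht))
  rw [integral_eq_sub_of_hasDerivAt hderiv (hcont.intervalIntegrable)]
  rw [show a + 1 * (b - a) = b by ring, show a + 0 * (b - a) = a by ring]
  have hab' : (0:ℝ) < a * b := by positivity
  have e1 : (a * b) ^ (n + 2) = (a * b) * (a ^ (n + 1) * b ^ (n + 1)) := by
    rw [show n + 2 = 1 + (n + 1) by ring, Real.rpow_add hab', Real.rpow_one,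
      Real.mul_rpow ha.le hb.le]
  rw [e1, Real.rpow_neg hb.le, Real.rpow_neg ha.le]
  have ha1 : a ^ (n + 1) ≠ 0 := by positivity
  have hb1 : b ^ (n + 1) ≠ 0 := by positivity
  have hne : -(n + 1) * (b - a) ≠ 0 := by
    apply mul_ne_zero _ (ne_of_gt he); intro hh; apply hn1'; linarith
  have hne' : (n + 1) * (b - a) ≠ 0 := mul_ne_zero hn1' (ne_of_gt he)
  have k1 : a * b * (a ^ (n+1) * b ^ (n+1)) * (b ^ (n+1))⁻¹ = a * b * a ^ (n+1) := by
    field_simp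
  have k2 : a * b * (a ^ (n+1) * b ^ (n+1)) * (a ^ (n+1))⁻¹ = a * b * b ^ (n+1) := by
    field_simp
  rw [k1, k2, div_sub_div_same, div_eq_div_iff hne hne']
  ring

lemma harm_bound (a b m s : ℝ) (ha : 0 < a) (hb : 0 < b) (hm : 0 ≤ m)
    (hs0 : 0 ≤ s) (hs1 : s ≤ 1) :
    (a * b / (a + s * (b - a))) ^ m ≤ s * a ^ m + (1 - s) * b ^ m := by
  have hD : 0 < a + s * (b - a) := by
    rcases eq_or_lt_of_le hs1 with h | h
    · rw [h]; nlinarith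
    · nlinarith [mul_pos (by linarith : (0:ℝ) < 1 - s) ha, mul_nonneg hs0 hb.le]
  have hX : 0 < a ^ s * b ^ (1 - s) := by positivity
  have step1 : a * b / (a + s * (b - a)) ≤ a ^ s * b ^ (1 - s) := by
    have g1 : (a⁻¹) ^ s * (b⁻¹) ^ (1 - s) ≤ s * a⁻¹ + (1 - s) * b⁻¹ :=
      Real.geom_mean_le_arith_mean2_weighted hs0 (by linarith) (by positivity) (by positivity)
        (by ring)
    rw [Real.inv_rpow ha.le, Real.inv_rpow hb.le, ← mul_inv] at g1
    have g2 : s * a⁻¹ + (1 - s) * b⁻¹ = (a + s * (b - a)) / (a * b) := by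
      field_simp; ring
    rw [g2] at g1
    rw [div_le_iff₀ hD]
    calc a * b = (a ^ s * b ^ (1 - s)) * ((a ^ s * b ^ (1 - s))⁻¹ * (a * b)) := by
          field_simp
    _ ≤ (a ^ s * b ^ (1 - s)) * ((a + s * (b - a)) / (a * b) * (a * b)) := by
          apply mul_le_mul_of_nonneg_left _ hX.le
          apply mul_le_mul_of_nonneg_right g1 (by positivity)
    _ = a ^ s * b ^ (1 - s) * (a + s * (b - a)) := by field_simp
  have step2 : (a * b / (a + s * (b - a))) ^ m ≤ (a ^ s * b ^ (1 - s)) ^ m :=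
    Real.rpow_le_rpow (by positivity) step1 hm
  have step3 : (a ^ s * b ^ (1 - s)) ^ m = (a ^ m) ^ s * (b ^ m) ^ (1 - s) := by
    rw [Real.mul_rpow (by positivity) (by positivity), ← Real.rpow_mul ha.le,
      ← Real.rpow_mul hb.le, mul_comm s m, mul_comm (1 - s) m, Real.rpow_mul ha.le,
      Real.rpow_mul hb.le]
  have step4 : (a ^ m) ^ s * (b ^ m) ^ (1 - s) ≤ s * a ^ m + (1 - s) * b ^ m :=
    Real.geom_mean_le_arith_mean2_weighted hs0 (by linarith) (by positivity) (by positivity)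
      (by ring)
  calc (a * b / (a + s * (b - a))) ^ m ≤ (a ^ s * b ^ (1 - s)) ^ m := step2
  _ = (a ^ m) ^ s * (b ^ m) ^ (1 - s) := step3
  _ ≤ s * a ^ m + (1 - s) * b ^ m := step4
lemma Dpos (a b s : ℝ) (ha : 0 < a) (hb : 0 < b) (hs0 : 0 ≤ s) (hs1 : s ≤ 1) :
    0 < a + s * (b - a) := by
  rcases eq_or_lt_of_le hs1 with h | h
  · rw [h]; nlinarith
  · nlinarith [mul_pos (by linarith : (0:ℝ) < 1 - s) ha, mul_nonneg hs0 hb.le]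

lemma gd_bound (a b n c s : ℝ) (ha : 0 < a) (hab : a < b) (hn1 : -1 < n)
    (hs0 : 0 ≤ s) (hs1 : s ≤ 1) :
    |(s - c) * ((a * b) ^ (n + 2) * (-(n + 2) * (a + s * (b - a)) ^ (-(n + 2) - 1) * (b - a)))|
      ≤ (n + 2) * (a * b) * (b - a) *
        (|s - c| * (s * a ^ (n + 1) + (1 - s) * b ^ (n + 1)) / (a + s * (b - a)) ^ 2) := by
  have hb : 0 < b := lt_trans ha hab
  have hD : 0 < a + s * (b - a) := Dpos a b s ha hb hs0 hs1
  have hn2 : (0:ℝ) < n + 2 := by linarith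
  rw [abs_mul]
  rw [show (n + 2) * (a * b) * (b - a) *
      (|s - c| * (s * a ^ (n + 1) + (1 - s) * b ^ (n + 1)) / (a + s * (b - a)) ^ 2)
      = |s - c| * ((n + 2) * (a * b) * (b - a) *
        ((s * a ^ (n + 1) + (1 - s) * b ^ (n + 1)) / (a + s * (b - a)) ^ 2)) by ring]
  apply mul_le_mul_of_nonneg_left _ (abs_nonneg _)
  rw [show (a * b) ^ (n + 2) * (-(n + 2) * (a + s * (b - a)) ^ (-(n + 2) - 1) * (b - a))
      = -((n + 2) * (a * b) ^ (n + 2) * (b - a) * (a + s * (b - a)) ^ (-(n + 2) - 1)) by ring,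
    abs_neg]
  have hp1 : (0:ℝ) < (a * b) ^ (n + 2) := Real.rpow_pos_of_pos (by positivity) _
  have hp2 : (0:ℝ) < (a + s * (b - a)) ^ (-(n + 2) - 1) := Real.rpow_pos_of_pos hD _
  rw [abs_of_nonneg (le_of_lt (mul_pos (mul_pos (mul_pos hn2 hp1)
    (by linarith : (0:ℝ) < b - a)) hp2))]
  have e4 : (a * b) ^ (n + 2) * (a + s * (b - a)) ^ (-(n + 2) - 1)
      = (a * b) * ((a * b / (a + s * (b - a))) ^ (n + 1) / (a + s * (b - a)) ^ 2) := by
    rw [show -(n + 2) - 1 = -(n + 1) + (-2 : ℝ) by ring, Real.rpow_add hD,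
      Real.rpow_neg hD.le (n + 1),
      show ((-2 : ℝ)) = -((2 : ℕ) : ℝ) by norm_num, Real.rpow_neg hD.le, Real.rpow_natCast,
      Real.div_rpow (by positivity) hD.le,
      show n + 2 = 1 + (n + 1) by ring, Real.rpow_add (by positivity : (0:ℝ) < a * b),
      Real.rpow_one]
    have h1 : (a + s * (b - a)) ^ (n + 1) ≠ 0 := by positivity
    have h2 : (a + s * (b - a)) ^ 2 ≠ 0 := by positivity
    field_simp
  rw [show (n + 2) * (a * b) ^ (n + 2) * (b - a) * (a + s * (b - a)) ^ (-(n + 2) - 1)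
      = (n + 2) * (b - a) * ((a * b) ^ (n + 2) * (a + s * (b - a)) ^ (-(n + 2) - 1)) by ring, e4]
  rw [show (n + 2) * (b - a) * ((a * b) * ((a * b / (a + s * (b - a))) ^ (n + 1)
      / (a + s * (b - a)) ^ 2))
      = (n + 2) * (a * b) * (b - a) * ((a * b / (a + s * (b - a))) ^ (n + 1)
      / (a + s * (b - a)) ^ 2) by ring]
  apply mul_le_mul_of_nonneg_left _
    (le_of_lt (mul_pos (mul_pos hn2 (mul_pos ha hb)) (by linarith : (0:ℝ) < b - a)))
  apply div_le_div_of_nonneg_right ?_ (by positivity)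
  exact harm_bound a b (n + 1) s ha hb (by linarith) hs0 hs1

noncomputable def gfun (a b n : ℝ) : ℝ → ℝ :=
  fun s => (a * b) ^ (n + 2) * (a + s * (b - a)) ^ (-(n + 2))

noncomputable def gdfun (a b n : ℝ) : ℝ → ℝ :=
  fun s => (a * b) ^ (n + 2) * (-(n + 2) * (a + s * (b - a)) ^ (-(n + 2) - 1) * (b - a))

lemma gfun_cont (a b n : ℝ) (ha : 0 < a) (hab : a < b) {x y : ℝ} (hx : 0 ≤ x) (hy : y ≤ 1)
    (hxy : x ≤ y) : ContinuousOn (gfun a b n) (Set.uIcc x y) := by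
  have hb : 0 < b := lt_trans ha hab
  rw [Set.uIcc_of_le hxy]
  apply ContinuousOn.mul continuousOn_const
  apply ContinuousOn.rpow_const (by fun_prop)
  intro t ht
  exact Or.inl (ne_of_gt (Dpos a b t ha hb (le_trans hx ht.1) (le_trans ht.2 hy)))

lemma gdfun_cont (a b n : ℝ) (ha : 0 < a) (hab : a < b) {x y : ℝ} (hx : 0 ≤ x) (hy : y ≤ 1)
    (hxy : x ≤ y) : ContinuousOn (gdfun a b n) (Set.uIcc x y) := by
  have hb : 0 < b := lt_trans ha hab
  rw [Set.uIcc_of_le hxy]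
  apply ContinuousOn.mul continuousOn_const
  apply ContinuousOn.mul _ continuousOn_const
  apply ContinuousOn.mul continuousOn_const
  apply ContinuousOn.rpow_const (by fun_prop)
  intro t ht
  exact Or.inl (ne_of_gt (Dpos a b t ha hb (le_trans hx ht.1) (le_trans ht.2 hy)))

lemma ibp_half (a b n c x y : ℝ) (ha : 0 < a) (hab : a < b) (hx : 0 ≤ x) (hy : y ≤ 1)
    (hxy : x ≤ y) :
    ∫ s in x..y, (s - c) * gdfun a b n s
      = (y - c) * gfun a b n y - (x - c) * gfun a b n x - ∫ s in x..y, gfun a b n s := by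
  have hb : 0 < b := lt_trans ha hab
  have h := intervalIntegral.integral_mul_deriv_eq_deriv_mul
    (u := fun s => s - c) (u' := fun _ => (1:ℝ)) (v := gfun a b n) (v' := gdfun a b n)
    (a := x) (b := y)
    (fun t _ => (hasDerivAt_id t).sub_const c)
    (fun t ht => by
      rw [Set.uIcc_of_le hxy] at ht
      exact hasDerivAt_g a b n t (Dpos a b t ha hb (le_trans hx ht.1) (le_trans ht.2 hy)))
    intervalIntegrable_const
    ((gdfun_cont a b n ha hab hx hy hxy).intervalIntegrable)
  simp only [one_mul] at h
  exact h

lemma bound_half (a b n c x y : ℝ) (ha : 0 < a) (hab : a < b) (hn1 : -1 < n)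
    (hx : 0 ≤ x) (hy : y ≤ 1) (hxy : x ≤ y) :
    |∫ s in x..y, (s - c) * gdfun a b n s|
      ≤ (n + 2) * (a * b) * (b - a) *
        (a ^ (n + 1) * (∫ s in x..y, |s - c| * s / (a + s * (b - a)) ^ 2)
          + b ^ (n + 1) * ((∫ s in x..y, |s - c| / (a + s * (b - a)) ^ 2)
            - ∫ s in x..y, |s - c| * s / (a + s * (b - a)) ^ 2)) := by
  have hb : 0 < b := lt_trans ha hab
  have hDne : ∀ t ∈ Set.uIcc x y, (a + t * (b - a)) ^ 2 ≠ 0 := by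
    intro t ht
    rw [Set.uIcc_of_le hxy] at ht
    exact pow_ne_zero 2 (ne_of_gt (Dpos a b t ha hb (le_trans hx ht.1) (le_trans ht.2 hy)))
  have hf1 : IntervalIntegrable (fun s => |s - c| / (a + s * (b - a)) ^ 2) volume x y :=
    (ContinuousOn.div (by fun_prop) (by fun_prop) hDne).intervalIntegrable
  have hf2 : IntervalIntegrable (fun s => |s - c| * s / (a + s * (b - a)) ^ 2) volume x y :=
    (ContinuousOn.div (by fun_prop) (by fun_prop) hDne).intervalIntegrable
  have habs : IntervalIntegrable (fun s => |(s - c) * gdfun a b n s|) volume x y := by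
    apply ContinuousOn.intervalIntegrable
    exact (ContinuousOn.mul (by fun_prop) (gdfun_cont a b n ha hab hx hy hxy)).abs
  have hbd : IntervalIntegrable (fun s => (n + 2) * (a * b) * (b - a) *
      (|s - c| * (s * a ^ (n + 1) + (1 - s) * b ^ (n + 1)) / (a + s * (b - a)) ^ 2))
      volume x y := by
    apply ContinuousOn.intervalIntegrable
    exact continuousOn_const.mul (ContinuousOn.div (by fun_prop) (by fun_prop) hDne)
  calc |∫ s in x..y, (s - c) * gdfun a b n s|
      ≤ ∫ s in x..y, |(s - c) * gdfun a b n s| :=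
        intervalIntegral.abs_integral_le_integral_abs hxy
    _ ≤ ∫ s in x..y, (n + 2) * (a * b) * (b - a) *
          (|s - c| * (s * a ^ (n + 1) + (1 - s) * b ^ (n + 1)) / (a + s * (b - a)) ^ 2) := by
        apply intervalIntegral.integral_mono_on hxy habs hbd
        intro t ht
        exact gd_bound a b n c t ha hab hn1 (le_trans hx ht.1) (le_trans ht.2 hy)
    _ = (n + 2) * (a * b) * (b - a) *
          ∫ s in x..y, |s - c| * (s * a ^ (n + 1) + (1 - s) * b ^ (n + 1))
            / (a + s * (b - a)) ^ 2 := intervalIntegral.integral_const_mul _ _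
    _ = (n + 2) * (a * b) * (b - a) *
        (a ^ (n + 1) * (∫ s in x..y, |s - c| * s / (a + s * (b - a)) ^ 2)
          + b ^ (n + 1) * ((∫ s in x..y, |s - c| / (a + s * (b - a)) ^ 2)
            - ∫ s in x..y, |s - c| * s / (a + s * (b - a)) ^ 2)) := by
        congr 1
        have hcongr : ∫ s in x..y, |s - c| * (s * a ^ (n + 1) + (1 - s) * b ^ (n + 1))
              / (a + s * (b - a)) ^ 2
            = ∫ s in x..y, (a ^ (n + 1) * (|s - c| * s / (a + s * (b - a)) ^ 2)
              + b ^ (n + 1) * (|s - c| / (a + s * (b - a)) ^ 2)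
              - b ^ (n + 1) * (|s - c| * s / (a + s * (b - a)) ^ 2)) := by
          apply intervalIntegral.integral_congr
          intro t _
          ring
        rw [hcongr, intervalIntegral.integral_sub ((hf2.const_mul _).add (hf1.const_mul _))
          (hf2.const_mul _), intervalIntegral.integral_add (hf2.const_mul _) (hf1.const_mul _),
          intervalIntegral.integral_const_mul, intervalIntegral.integral_const_mul,
          intervalIntegral.integral_const_mul]
        ring
theorem prop_means7 (a b : ℝ) (ha : 0 < a) (hab : a < b)
    (n : ℝ) (hn1 : -1 < n) (hn0 : n ≠ 0)
    (lam : ℝ) (hlam : lam ∈ Icc (0:ℝ) 1) (q : ℝ) (hq : 1 ≤ q) :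
    |(1 - lam) * (2 * a * b / (a + b)) ^ (n + 2) +
        lam * ((a ^ (n + 2) + b ^ (n + 2)) / 2) -
        Real.sqrt (a * b) ^ 2 *
          (((b ^ (n + 1) - a ^ (n + 1)) / ((n + 1) * (b - a))) ^ (1 / n)) ^ n| ≤
      (a * b * (b - a) * (n + 2) / 2) *
        (C1 lam a b ^ (1 - 1 / q) *
            (C2 lam a b * a ^ ((n + 1) * q) + C3 lam a b * b ^ ((n + 1) * q)) ^ (1 / q)
          + C1 lam b a ^ (1 - 1 / q) *
            (C3 lam b a * a ^ ((n + 1) * q) + C2 lam b a * b ^ ((n + 1) * q)) ^ (1 / q)) := by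
  obtain ⟨hl0, hl1⟩ := hlam
  have hb : 0 < b := lt_trans ha hab
  have he : (0:ℝ) < b - a := by linarith
  have hn2 : (0:ℝ) < n + 2 := by linarith
  have hm0 : (0:ℝ) < n + 1 := by linarith
  have hab2 : (0:ℝ) < a + b := by linarith
  -- values of the integrals of |s-c| weights
  have hJ2 : ∫ s in (0:ℝ)..(1/2), |s - lam/2| * s / (a + s * (b - a)) ^ 2
      = C2 lam a b / 2 := by
    rw [int_abs_2 a (b-a) 0 (1/2) (lam/2) ha he le_rfl (by linarith) (by linarith)]
    linarith [E2 a b lam ha hab hl0 hl1]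
  have hJ1 : ∫ s in (0:ℝ)..(1/2), |s - lam/2| / (a + s * (b - a)) ^ 2
      = C1 lam a b / 2 := by
    rw [int_abs_1 a (b-a) 0 (1/2) (lam/2) ha he le_rfl (by linarith) (by linarith)]
    linarith [E1 a b lam ha hab hl0 hl1]
  have hK2 : ∫ s in (1/2:ℝ)..1, |s - (1 - lam/2)| * s / (a + s * (b - a)) ^ 2
      = (C1 lam b a - C2 lam b a) / 2 := by
    rw [int_abs_2 a (b-a) (1/2) 1 (1 - lam/2) ha he (by norm_num) (by linarith) (by linarith)]
    linarith [E4 a b lam ha hab hl0 hl1]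
  have hK1 : ∫ s in (1/2:ℝ)..1, |s - (1 - lam/2)| / (a + s * (b - a)) ^ 2
      = C1 lam b a / 2 := by
    rw [int_abs_1 a (b-a) (1/2) 1 (1 - lam/2) ha he (by norm_num) (by linarith) (by linarith)]
    linarith [E3 a b lam ha hab hl0 hl1]
  -- nonnegativity of the C coefficients
  have hDne : ∀ (x y : ℝ), x ≤ y → 0 ≤ x → y ≤ 1 →
      ∀ t ∈ Set.uIcc x y, (a + t * (b - a)) ^ 2 ≠ 0 := by
    intro x y hxy hx hy t ht
    rw [Set.uIcc_of_le hxy] at ht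
    exact pow_ne_zero 2 (ne_of_gt (Dpos a b t ha hb (le_trans hx ht.1) (le_trans ht.2 hy)))
  have hC2ab : 0 ≤ C2 lam a b := by
    have h0 : 0 ≤ ∫ s in (0:ℝ)..(1/2), |s - lam/2| * s / (a + s * (b - a)) ^ 2 :=
      intervalIntegral.integral_nonneg (by norm_num)
        (fun u hu => div_nonneg (mul_nonneg (abs_nonneg _) hu.1) (by positivity))
    linarith [hJ2]
  have hC3ba : 0 ≤ C3 lam b a := by
    have h0 : 0 ≤ ∫ s in (1/2:ℝ)..1, |s - (1 - lam/2)| * s / (a + s * (b - a)) ^ 2 :=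
      intervalIntegral.integral_nonneg (by norm_num)
        (fun u hu => div_nonneg (mul_nonneg (abs_nonneg _) (by linarith [hu.1])) (by positivity))
    simp only [C3]
    linarith [hK2]
  have hC3ab : 0 ≤ C3 lam a b := by
    have hmono : (∫ s in (0:ℝ)..(1/2), |s - lam/2| * s / (a + s * (b - a)) ^ 2)
        ≤ ∫ s in (0:ℝ)..(1/2), |s - lam/2| / (a + s * (b - a)) ^ 2 := by
      apply intervalIntegral.integral_mono_on (by norm_num)
        ((ContinuousOn.div (by fun_prop) (by fun_prop)
          (hDne 0 (1/2) (by norm_num) le_rfl (by norm_num))).intervalIntegrable)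
        ((ContinuousOn.div (by fun_prop) (by fun_prop)
          (hDne 0 (1/2) (by norm_num) le_rfl (by norm_num))).intervalIntegrable)
      intro t ht
      apply div_le_div_of_nonneg_right ?_ ?_
      · nlinarith [abs_nonneg (t - lam/2), ht.1, ht.2]
      · have := Dpos a b t ha hb ht.1 (by linarith [ht.2])
        positivity
    simp only [C3]
    linarith [hJ1, hJ2]
  have hC2ba : 0 ≤ C2 lam b a := by
    have hmono : (∫ s in (1/2:ℝ)..1, |s - (1 - lam/2)| * s / (a + s * (b - a)) ^ 2)
        ≤ ∫ s in (1/2:ℝ)..1, |s - (1 - lam/2)| / (a + s * (b - a)) ^ 2 := by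
      apply intervalIntegral.integral_mono_on (by norm_num)
        ((ContinuousOn.div (by fun_prop) (by fun_prop)
          (hDne (1/2) 1 (by norm_num) (by norm_num) le_rfl)).intervalIntegrable)
        ((ContinuousOn.div (by fun_prop) (by fun_prop)
          (hDne (1/2) 1 (by norm_num) (by norm_num) le_rfl)).intervalIntegrable)
      intro t ht
      apply div_le_div_of_nonneg_right ?_ ?_
      · nlinarith [abs_nonneg (t - (1 - lam/2)), ht.1, ht.2]
      · have := Dpos a b t ha hb (by linarith [ht.1]) ht.2
        positivity
    linarith [hK1, hK2]
  have hC1ab : 0 ≤ C1 lam a b := by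
    have : C1 lam a b = C2 lam a b + C3 lam a b := by simp only [C3]; ring
    linarith
  have hC1ba : 0 ≤ C1 lam b a := by
    have : C1 lam b a = C2 lam b a + C3 lam b a := by simp only [C3]; ring
    linarith
  -- values of g
  have hg0 : gfun a b n 0 = b ^ (n + 2) := by
    simp only [gfun]
    rw [show a + 0 * (b - a) = a by ring, Real.rpow_neg ha.le,
      Real.mul_rpow ha.le hb.le]
    have h1 : a ^ (n + 2) ≠ 0 := by positivity
    field_simp
  have hg1 : gfun a b n 1 = a ^ (n + 2) := by
    simp only [gfun]
    rw [show a + 1 * (b - a) = b by ring, Real.rpow_neg hb.le, Real.mul_rpow ha.le hb.le]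
    have h1 : b ^ (n + 2) ≠ 0 := by positivity
    field_simp
  have hgh : gfun a b n (1/2) = (2 * a * b / (a + b)) ^ (n + 2) := by
    simp only [gfun]
    have hr : (a * b * ((a + b)/2)⁻¹) ^ (n + 2)
        = (a * b) ^ (n + 2) * (((a + b)/2) ^ (n + 2))⁻¹ := by
      rw [Real.mul_rpow (by positivity) (by positivity), Real.inv_rpow (by positivity)]
    rw [show a + 1/2 * (b - a) = (a + b)/2 by ring,
      show 2 * a * b / (a + b) = a * b * ((a + b)/2)⁻¹ by rw [inv_div]; ring,
      hr, Real.rpow_neg (by positivity)]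
  -- the integral identity
  have hIBP1 := ibp_half a b n (lam/2) 0 (1/2) ha hab le_rfl (by norm_num) (by norm_num)
  have hIBP2 := ibp_half a b n (1 - lam/2) (1/2) 1 ha hab (by norm_num) le_rfl (by norm_num)
  have hsplit : (∫ s in (0:ℝ)..(1/2), gfun a b n s) + ∫ s in (1/2:ℝ)..1, gfun a b n s
      = ∫ s in (0:ℝ)..1, gfun a b n s :=
    intervalIntegral.integral_add_adjacent_intervals
      ((gfun_cont a b n ha hab le_rfl (by norm_num) (by norm_num)).intervalIntegrable)
      ((gfun_cont a b n ha hab (by norm_num) le_rfl (by norm_num)).intervalIntegrable)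
  have hint : ∫ s in (0:ℝ)..1, gfun a b n s
      = a * b * (b ^ (n + 1) - a ^ (n + 1)) / ((n + 1) * (b - a)) := by
    simp only [gfun]
    exact integral_g a b n ha hab hn1
  have hdelta : (1 - lam) * (2 * a * b / (a + b)) ^ (n + 2) +
        lam * ((a ^ (n + 2) + b ^ (n + 2)) / 2) -
        a * b * ((b ^ (n + 1) - a ^ (n + 1)) / ((n + 1) * (b - a)))
      = (∫ s in (0:ℝ)..(1/2), (s - lam/2) * gdfun a b n s)
        + ∫ s in (1/2:ℝ)..1, (s - (1 - lam/2)) * gdfun a b n s := by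
    rw [hIBP1, hIBP2, hg0, hg1, hgh]
    have hint' : a * b * ((b ^ (n + 1) - a ^ (n + 1)) / ((n + 1) * (b - a)))
        = ∫ s in (0:ℝ)..1, gfun a b n s := by rw [hint]; ring
    rw [hint', ← hsplit]
    ring
  -- bounds for the two halves
  have hB1 := bound_half a b n (lam/2) 0 (1/2) ha hab hn1 le_rfl (by norm_num) (by norm_num)
  have hB2 := bound_half a b n (1 - lam/2) (1/2) 1 ha hab hn1 (by norm_num) le_rfl (by norm_num)
  rw [hJ2, hJ1] at hB1
  rw [hK2, hK1] at hB2
  -- Jensen / power mean step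
  have ham : a ^ ((n + 1) * q) = (a ^ (n + 1)) ^ q := Real.rpow_mul ha.le _ _
  have hbm : b ^ ((n + 1) * q) = (b ^ (n + 1)) ^ q := Real.rpow_mul hb.le _ _
  have hT1 : C2 lam a b * a ^ (n + 1) + C3 lam a b * b ^ (n + 1)
      ≤ C1 lam a b ^ (1 - 1 / q) *
        (C2 lam a b * a ^ ((n + 1) * q) + C3 lam a b * b ^ ((n + 1) * q)) ^ (1 / q) := by
    have h := jensenC (C2 lam a b) (C3 lam a b) (a ^ (n + 1)) (b ^ (n + 1)) q hC2ab hC3ab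
      (by positivity) (by positivity) hq
    rw [show C2 lam a b + C3 lam a b = C1 lam a b by simp only [C3]; ring, ← ham, ← hbm] at h
    exact h
  have hT2 : C3 lam b a * a ^ (n + 1) + C2 lam b a * b ^ (n + 1)
      ≤ C1 lam b a ^ (1 - 1 / q) *
        (C3 lam b a * a ^ ((n + 1) * q) + C2 lam b a * b ^ ((n + 1) * q)) ^ (1 / q) := by
    have h := jensenC (C3 lam b a) (C2 lam b a) (a ^ (n + 1)) (b ^ (n + 1)) q hC3ba hC2ba
      (by positivity) (by positivity) hq
    rw [show C3 lam b a + C2 lam b a = C1 lam b a by simp only [C3]; ring, ← ham, ← hbm] at h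
    exact h
  -- rewrite the left-hand side
  have hXnn : 0 ≤ (b ^ (n + 1) - a ^ (n + 1)) / ((n + 1) * (b - a)) := by
    apply div_nonneg _ (by positivity)
    have := Real.rpow_le_rpow ha.le hab.le (by linarith : 0 ≤ n + 1)
    linarith
  rw [Real.sq_sqrt (by positivity : (0:ℝ) ≤ a * b), ← Real.rpow_mul hXnn,
    show 1/n*n = 1 by field_simp, Real.rpow_one, hdelta]
  calc |(∫ s in (0:ℝ)..(1/2), (s - lam/2) * gdfun a b n s)
        + ∫ s in (1/2:ℝ)..1, (s - (1 - lam/2)) * gdfun a b n s|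
      ≤ |∫ s in (0:ℝ)..(1/2), (s - lam/2) * gdfun a b n s|
        + |∫ s in (1/2:ℝ)..1, (s - (1 - lam/2)) * gdfun a b n s| := abs_add_le _ _
    _ ≤ (n + 2) * (a * b) * (b - a) *
          (a ^ (n + 1) * (C2 lam a b / 2)
            + b ^ (n + 1) * (C1 lam a b / 2 - C2 lam a b / 2))
        + (n + 2) * (a * b) * (b - a) *
          (a ^ (n + 1) * ((C1 lam b a - C2 lam b a) / 2)
            + b ^ (n + 1) * (C1 lam b a / 2 - (C1 lam b a - C2 lam b a) / 2)) :=
        add_le_add hB1 hB2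
    _ = (a * b * (b - a) * (n + 2) / 2) *
          ((C2 lam a b * a ^ (n + 1) + C3 lam a b * b ^ (n + 1))
            + (C3 lam b a * a ^ (n + 1) + C2 lam b a * b ^ (n + 1))) := by
        simp only [C3]; ring
    _ ≤ (a * b * (b - a) * (n + 2) / 2) *
          (C1 lam a b ^ (1 - 1 / q) *
            (C2 lam a b * a ^ ((n + 1) * q) + C3 lam a b * b ^ ((n + 1) * q)) ^ (1 / q)
          + C1 lam b a ^ (1 - 1 / q) *
            (C3 lam b a * a ^ ((n + 1) * q) + C2 lam b a * b ^ ((n + 1) * q)) ^ (1 / q)) := by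
        apply mul_le_mul_of_nonneg_left (add_le_add hT1 hT2)
        nlinarith [mul_pos (mul_pos (mul_pos ha hb) he) hn2]
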